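/- For every prime p, ∑_{k=1}^{p-1} (-1)^k B_k ≡ 1 (mod p). -/

import Mathlib

/-- The Bell numbers: `bell n` is the number of partitions of an `n`-element set,
determined by `bell 0 = 1` and `bell (n+1) = ∑_{k=0}^{n} C(n,k) * bell k`. -/
def bell : ℕ → ℕ
  | 0 => 1
  | n + 1 => ∑ k ∈ (Finset.range (n + 1)).attach, n.choose k * bell k
decreasing_by exact Finset.mem_range.mp k.2

open Polynomial Finset

lemma bell_succ (n : ℕ) : bell (n + 1) = ∑ k ∈ Finset.range (n + 1), n.choose k * bell k := by
  rw [bell]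
  exact Finset.sum_attach _ fun k => n.choose k * bell k

variable {p : ℕ}

/-- The umbral functional sending `X^n` to `bell n` mod `p`. -/
noncomputable def phi (p : ℕ) : Polynomial (ZMod p) →ₗ[ZMod p] ZMod p :=
  Polynomial.lsum fun n => (bell n : ZMod p) • LinearMap.id

lemma phi_monomial (n : ℕ) (a : ZMod p) : phi p (monomial n a) = a * bell n := by
  simp [phi, Polynomial.sum_monomial_index, mul_comm]

lemma phi_X_pow (n : ℕ) : phi p (X ^ n) = bell n := by
  rw [← monomial_one_right_eq_X_pow, phi_monomial, one_mul]

lemma phi_X_pow_mul (n : ℕ) : phi p (X * X ^ n) = phi p ((X + 1) ^ n) := by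
  rw [← pow_succ', phi_X_pow]
  rw [add_pow]
  simp only [one_pow, mul_one, map_sum]
  have : ∀ k ∈ Finset.range (n + 1), phi p (X ^ k * ((n.choose k : ℕ) : (ZMod p)[X])) =
      (n.choose k : ZMod p) * bell k := by
    intro k _
    rw [mul_comm, ← C_eq_natCast, ← smul_eq_C_mul, map_smul, phi_X_pow, smul_eq_mul]
  rw [Finset.sum_congr rfl this, bell_succ]
  push_cast
  ring

lemma phi_X_mul (f : Polynomial (ZMod p)) : phi p (X * f) = phi p (f.comp (X + 1)) := by
  induction f using Polynomial.induction_on' with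
  | add f g hf hg => rw [mul_add, map_add, hf, hg, add_comp, map_add]
  | monomial n a =>
    rw [← C_mul_X_pow_eq_monomial, mul_left_comm, ← smul_eq_C_mul, map_smul, mul_comp,
      C_comp, X_pow_comp, ← smul_eq_C_mul, map_smul, phi_X_pow_mul]

lemma phi_prod_mul (k : ℕ) (f : Polynomial (ZMod p)) :
    phi p ((∏ i ∈ Finset.range k, (X - C (i : ZMod p))) * f) =
      phi p (f.comp (X + C (k : ZMod p))) := by
  induction k generalizing f with
  | zero => simp
  | succ k ih =>
    rw [Finset.prod_range_succ, mul_assoc, ih, mul_comp, sub_comp, X_comp, C_comp,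
      add_sub_cancel_right, phi_X_mul, comp_assoc]
    congr 2
    rw [add_comp, X_comp, C_comp]
    push_cast [C_add, C_1]
    ring

lemma prod_range_eq (hp : p.Prime) :
    ∏ i ∈ Finset.range p, (X - C (i : ZMod p)) = X ^ p - X := by
  haveI : Fact p.Prime := ⟨hp⟩
  have hcard : Fintype.card (ZMod p) = p := ZMod.card p
  have hroots : (X ^ p - X : (ZMod p)[X]).roots = Finset.univ.val := by
    have := FiniteField.roots_X_pow_card_sub_X (ZMod p)
    rwa [hcard] at this
  have hdeg : (X ^ p - X : (ZMod p)[X]).natDegree = p := by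
    have := FiniteField.X_pow_card_sub_X_natDegree_eq (ZMod p) hp.one_lt
    exact this
  have hm : (X ^ p - X : (ZMod p)[X]).Monic := by
    apply Polynomial.monic_X_pow_sub
    rw [Polynomial.degree_X]
    exact_mod_cast hp.one_lt
  have hsplits : Splits (X ^ p - X : (ZMod p)[X]) := by
    rw [Polynomial.splits_iff_card_roots, hroots, hdeg]
    simpa using hcard
  have heq := hsplits.eq_prod_roots_of_monic hm
  rw [hroots] at heq
  rw [heq]
  rw [← Finset.prod_eq_multiset_prod]
  refine (Finset.prod_bij' (fun a _ => (a : ZMod p).val) (fun a _ => ((a : ℕ) : ZMod p))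
    ?_ ?_ ?_ ?_ ?_).symm
  · intro a _; exact Finset.mem_range.2 ((ZMod.val_lt a))
  · intro a _; exact Finset.mem_univ _
  · intro a _; exact ZMod.natCast_rightInverse a
  · intro a ha; exact ZMod.val_cast_of_lt (Finset.mem_range.1 ha)
  · intro a _; rw [ZMod.natCast_rightInverse a]

lemma bell_p (hp : p.Prime) : (bell p : ZMod p) = 2 := by
  have h := phi_prod_mul p (1 : Polynomial (ZMod p))
  rw [mul_one, prod_range_eq hp, one_comp, map_sub, phi_X_pow, ← pow_one (X : (ZMod p)[X]),
    phi_X_pow] at h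
  have h1 : phi p (1 : Polynomial (ZMod p)) = 1 := by
    have := phi_X_pow (p := p) 0
    simpa [bell] using this
  rw [h1] at h
  have hb1 : bell 1 = 1 := by simp [bell_succ, bell]
  rw [hb1] at h
  push_cast at h
  rw [sub_eq_iff_eq_add] at h
  rw [h]
  norm_num

lemma choose_cast (hp : p.Prime) : ∀ k ≤ p - 1, (((p - 1).choose k : ℕ) : ZMod p) = (-1) ^ k := by
  intro k
  induction k with
  | zero => simp
  | succ k ih =>
    intro hk
    have hpk : ((p.choose (k + 1) : ℕ) : ZMod p) = 0 :=
      (ZMod.natCast_eq_zero_iff _ _).2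
        (hp.dvd_choose_self (Nat.succ_ne_zero k) (by omega))
    have hpas : p.choose (k + 1) = (p - 1).choose k + (p - 1).choose (k + 1) := by
      obtain ⟨q, rfl⟩ : ∃ q, p = q + 1 := ⟨p - 1, by have := hp.two_le; omega⟩
      simp [Nat.choose_succ_succ]
    rw [hpas] at hpk
    push_cast at hpk
    rw [ih (by omega)] at hpk
    rw [pow_succ]
    linear_combination hpk

/-- For every prime `p`, `∑_{k=1}^{p-1} (-1)^k B_k ≡ 1 (mod p)`. -/
theorem alternating_bell_sum (p : ℕ) (hp : p.Prime) :
    ∑ k ∈ Finset.Icc 1 (p - 1), (-1 : ZMod p) ^ k * (bell k : ZMod p) = 1 := by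
  haveI : Fact p.Prime := ⟨hp⟩
  have hp1 : p = (p - 1) + 1 := by have := hp.two_le; omega
  have hbp : (bell p : ZMod p) = ∑ k ∈ Finset.range p, (-1 : ZMod p) ^ k * (bell k : ZMod p) := by
    have hb := bell_succ (p - 1)
    rw [← hp1] at hb
    rw [hb]
    push_cast
    refine Finset.sum_congr rfl fun k hk => ?_
    rw [choose_cast hp k (by have := Finset.mem_range.1 hk; omega)]
  have hsplit : ∑ k ∈ Finset.range p, (-1 : ZMod p) ^ k * (bell k : ZMod p) =
      (bell 0 : ZMod p) + ∑ k ∈ Finset.Icc 1 (p - 1), (-1 : ZMod p) ^ k * (bell k : ZMod p) := by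
    have h0 : (0 : ℕ) ∈ Finset.range p := Finset.mem_range.2 hp.pos
    have hset : (Finset.range p).erase 0 = Finset.Icc 1 (p - 1) := by
      ext k
      simp only [Finset.mem_erase, Finset.mem_range, Finset.mem_Icc]
      omega
    rw [← Finset.add_sum_erase _ _ h0, hset]
    simp only [pow_zero, one_mul]
  rw [bell_p hp, hsplit] at hbp
  have : (bell 0 : ZMod p) = 1 := by simp [bell]
  rw [this] at hbp
  linear_combination -hbp
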